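/- For n ∈ (0,1), m = n/√(1-n²), the anti-Salkowski curve ψ(t) = ( (n/(4m))·[((n-1)/(2n+1))·sin((2n+1)t) + ((n+1)/(2n-1))·sin((2n-1)t) - 2n·sin t], (n/(4m))·[((1-n)/(1+2n))·cos((1+2n)t) - ((1+n)/(1-2n))·cos((1-2n)t) + 2n·cos t], (n/(4m²))·(2nt - sin(2nt)) ) has torsion identically 1 and curvature κ(t) = cot(nt) on intervals where sin(nt), cos(nt) > 0. -/

import Mathlib

open Real
open scoped RealInnerProductSpace

noncomputable def cross3 (a b : EuclideanSpace ℝ (Fin 3)) : EuclideanSpace ℝ (Fin 3) :=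
  (WithLp.equiv 2 (Fin 3 → ℝ)).symm
    ![a 1 * b 2 - a 2 * b 1, a 2 * b 0 - a 0 * b 2, a 0 * b 1 - a 1 * b 0]

lemma hasDerivAt_E3 {f g h : ℝ → ℝ} {f' g' h' : ℝ} {t : ℝ}
    (hf : HasDerivAt f f' t) (hg : HasDerivAt g g' t) (hh : HasDerivAt h h' t) :
    HasDerivAt (fun x => (WithLp.equiv 2 (Fin 3 → ℝ)).symm ![f x, g x, h x])
      ((WithLp.equiv 2 (Fin 3 → ℝ)).symm ![f', g', h']) t := by
  have hp : HasDerivAt (fun x => (![f x, g x, h x] : Fin 3 → ℝ)) ![f', g', h'] t := by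
    rw [hasDerivAt_pi]
    intro i
    fin_cases i
    · simpa using hf
    · simpa using hg
    · simpa using hh
  exact ((PiLp.continuousLinearEquiv 2 ℝ (fun _ : Fin 3 => ℝ)).symm.hasFDerivAt.comp_hasDerivAt t hp)

lemma cross3_mk (x1 x2 x3 y1 y2 y3 : ℝ) :
    cross3 ((WithLp.equiv 2 (Fin 3 → ℝ)).symm ![x1,x2,x3]) ((WithLp.equiv 2 (Fin 3 → ℝ)).symm ![y1,y2,y3])
    = (WithLp.equiv 2 (Fin 3 → ℝ)).symm ![x2*y3-x3*y2, x3*y1-x1*y3, x1*y2-x2*y1] := by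
  simp [cross3, WithLp.equiv_symm_apply, PiLp.toLp_apply]

lemma norm_mk (x1 x2 x3 : ℝ) :
    ‖(WithLp.equiv 2 (Fin 3 → ℝ)).symm ![x1,x2,x3]‖ = Real.sqrt (x1^2+x2^2+x3^2) := by
  rw [EuclideanSpace.norm_eq]
  simp [Fin.sum_univ_three, WithLp.equiv_symm_apply, PiLp.toLp_apply, Real.norm_eq_abs, sq_abs]

lemma inner_mk (x1 x2 x3 y1 y2 y3 : ℝ) :
    ⟪(WithLp.equiv 2 (Fin 3 → ℝ)).symm ![x1,x2,x3], (WithLp.equiv 2 (Fin 3 → ℝ)).symm ![y1,y2,y3]⟫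
    = x1*y1+x2*y2+x3*y3 := by
  simp [PiLp.inner_apply, Fin.sum_univ_three, WithLp.equiv_symm_apply, PiLp.toLp_apply, RCLike.inner_apply, conj_trivial]
  ring

/-- The anti-Salkowski curve: explicit parametrization with τ ≡ 1 and
κ(t) = cot(nt) on intervals where sin(nt), cos(nt) > 0. -/
theorem anti_salkowski_curve (n m : ℝ) (hn : n ∈ Set.Ioo (0:ℝ) 1) (hn2 : n ≠ 1/2)
    (hm : m = n / Real.sqrt (1 - n ^ 2))
    (ψ : ℝ → EuclideanSpace ℝ (Fin 3))
    (hψ : ψ = fun t => (WithLp.equiv 2 (Fin 3 → ℝ)).symm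
      ![(n/(4*m)) * ((n-1)/(2*n+1) * Real.sin ((2*n+1)*t)
          + (n+1)/(2*n-1) * Real.sin ((2*n-1)*t) - 2*n * Real.sin t),
        (n/(4*m)) * ((1-n)/(1+2*n) * Real.cos ((1+2*n)*t)
          - (1+n)/(1-2*n) * Real.cos ((1-2*n)*t) + 2*n * Real.cos t),
        (n/(4*m^2)) * (2*n*t - Real.sin (2*n*t))]) :
    ∀ t : ℝ, 0 < Real.sin (n*t) → 0 < Real.cos (n*t) →
      ⟪cross3 (deriv ψ t) (deriv (deriv ψ) t), deriv (deriv (deriv ψ)) t⟫ /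
          ‖cross3 (deriv ψ t) (deriv (deriv ψ) t)‖ ^ 2 = 1 ∧
      ‖cross3 (deriv ψ t) (deriv (deriv ψ) t)‖ / ‖deriv ψ t‖ ^ 3
        = Real.cos (n*t) / Real.sin (n*t) := by
  obtain ⟨hn0, hn1⟩ := hn
  have hn0' : n ≠ 0 := ne_of_gt hn0
  have hs0 : (0:ℝ) < 1 - n^2 := by nlinarith
  set s := Real.sqrt (1 - n^2) with hs_def
  have hs : 0 < s := Real.sqrt_pos.2 hs0
  have hs' : s ≠ 0 := ne_of_gt hs
  have h3 : s^2 = 1 - n^2 := Real.sq_sqrt hs0.le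
  have hq : n/(4*m) = s/4 := by rw [hm, hs_def]; field_simp
  have hq3 : n/(4*m^2) * (2*n) = s^2/2 := by rw [hm, hs_def]; rw [div_pow]; field_simp; ring
  have hden1 : (2*n+1) ≠ 0 := by positivity
  have hden2 : (2*n-1) ≠ 0 := by
    intro h; apply hn2; linarith
  have hden3 : (1+2*n) ≠ 0 := by positivity
  have hden4 : (1-2*n) ≠ 0 := by
    intro h; apply hn2; linarith

  have HD1 : ∀ r : ℝ, HasDerivAt ψ ((WithLp.equiv 2 (Fin 3 → ℝ)).symm ![s*Real.sin (n*r)*(Real.sin r*Real.cos (n*r) - n*(Real.cos r*Real.sin (n*r))), -(s*Real.sin (n*r)*(n*(Real.sin r*Real.sin (n*r)) + Real.cos r*Real.cos (n*r))), s^2*Real.sin (n*r)^2]) r := by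
    intro r
    have h1 : Real.sin r^2 + Real.cos r^2 = 1 := Real.sin_sq_add_cos_sq r
    have h2 : Real.sin (n*r)^2 + Real.cos (n*r)^2 = 1 := Real.sin_sq_add_cos_sq (n*r)
    rw [hψ]
    apply hasDerivAt_E3
    · have H := ((((((hasDerivAt_id r).const_mul (2*n+1)).sin.const_mul ((n-1)/(2*n+1))).add
        ((((hasDerivAt_id r).const_mul (2*n-1)).sin.const_mul ((n+1)/(2*n-1))))).sub
        ((Real.hasDerivAt_sin r).const_mul (2*n))).const_mul (n/(4*m)))
      refine H.congr_deriv (Eq.symm ?_)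
      simp only [id_eq]
      rw [hq]
      have d1 : (n-1)/(2*n+1) * (Real.cos ((2*n+1)*r) * ((2*n+1)*1)) = (n-1) * Real.cos ((2*n+1)*r) := by
        field_simp
      have d2 : (n+1)/(2*n-1) * (Real.cos ((2*n-1)*r) * ((2*n-1)*1)) = (n+1) * Real.cos ((2*n-1)*r) := by
        rw [mul_one, mul_comm (Real.cos _) (2*n-1), ← mul_assoc, div_mul_cancel₀ _ hden2]
      rw [d1, d2, show (2*n+1)*r = n*r + n*r + r by ring, show (2*n-1)*r = n*r + n*r - r by ring]
      simp only [Real.cos_add, Real.cos_sub, Real.sin_add, Real.sin_sub]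
      linear_combination ((-1/2)*(n)*(s)*(Real.cos r)) * h2
    · have H := ((((((hasDerivAt_id r).const_mul (1+2*n)).cos.const_mul ((1-n)/(1+2*n))).sub
        ((((hasDerivAt_id r).const_mul (1-2*n)).cos.const_mul ((1+n)/(1-2*n))))).add
        ((Real.hasDerivAt_cos r).const_mul (2*n))).const_mul (n/(4*m)))
      refine H.congr_deriv (Eq.symm ?_)
      simp only [id_eq]
      rw [hq]
      have d1 : (1-n)/(1+2*n) * (-Real.sin ((1+2*n)*r) * ((1+2*n)*1)) = -((1-n) * Real.sin ((1+2*n)*r)) := by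
        field_simp
      have d2 : (1+n)/(1-2*n) * (-Real.sin ((1-2*n)*r) * ((1-2*n)*1)) = -((1+n) * Real.sin ((1-2*n)*r)) := by
        rw [mul_one, neg_mul, mul_neg, mul_comm (Real.sin _) (1-2*n), ← mul_assoc, div_mul_cancel₀ _ hden4]
      rw [d1, d2, show (1+2*n)*r = n*r + n*r + r by ring, show (1-2*n)*r = r - (n*r + n*r) by ring]
      simp only [Real.cos_add, Real.cos_sub, Real.sin_add, Real.sin_sub]
      linear_combination ((-1/2)*(n)*(s)*(Real.sin r)) * h2
    · have H := ((((hasDerivAt_id r).const_mul (2*n)).sub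
        (((hasDerivAt_id r).const_mul (2*n)).sin)).const_mul (n/(4*m^2)))
      refine H.congr_deriv (Eq.symm ?_)
      simp only [id_eq]
      rw [show (2*n)*r = n*r + n*r by ring, Real.cos_add]
      linear_combination (s^2/2) * h2 - (1 - (Real.cos (n*r)*Real.cos (n*r) - Real.sin (n*r)*Real.sin (n*r))) * hq3

  have HD2 : ∀ r : ℝ, HasDerivAt (fun x => (WithLp.equiv 2 (Fin 3 → ℝ)).symm ![s*Real.sin (n*x)*(Real.sin x*Real.cos (n*x) - n*(Real.cos x*Real.sin (n*x))), -(s*Real.sin (n*x)*(n*(Real.sin x*Real.sin (n*x)) + Real.cos x*Real.cos (n*x))), s^2*Real.sin (n*x)^2])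
      ((WithLp.equiv 2 (Fin 3 → ℝ)).symm ![s*n*Real.cos (n*r)*(Real.sin r*Real.cos (n*r) - n*(Real.cos r*Real.sin (n*r))) + s^3*(Real.sin (n*r)*(Real.cos r*Real.cos (n*r))), -(s*n*Real.cos (n*r)*(n*(Real.sin r*Real.sin (n*r)) + Real.cos r*Real.cos (n*r))) + s^3*(Real.sin (n*r)*(Real.sin r*Real.cos (n*r))), 2*s^2*n*(Real.sin (n*r)*Real.cos (n*r))]) r := by
    intro r
    have h3' := h3
    have hS := Real.hasDerivAt_sin r
    have hC := Real.hasDerivAt_cos r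
    have hSn := ((hasDerivAt_id r).const_mul n).sin
    have hCn := ((hasDerivAt_id r).const_mul n).cos
    apply hasDerivAt_E3
    · have H := (hSn.const_mul s).mul ((hS.mul hCn).sub ((hC.mul hSn).const_mul n))
      refine H.congr_deriv (Eq.symm ?_)
      simp only [id_eq, Pi.mul_apply, Pi.sub_apply, Pi.add_apply, Pi.neg_apply]
      linear_combination ((s)*(Real.cos r)*(Real.sin (n*r))*(Real.cos (n*r))) * h3
    · have H := ((hSn.const_mul s).mul (((hS.mul hSn).const_mul n).add (hC.mul hCn))).neg
      refine H.congr_deriv (Eq.symm ?_)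
      simp only [id_eq, Pi.mul_apply, Pi.sub_apply, Pi.add_apply, Pi.neg_apply]
      linear_combination ((s)*(Real.sin r)*(Real.sin (n*r))*(Real.cos (n*r))) * h3
    · have H := (hSn.pow 2).const_mul (s^2)
      refine H.congr_deriv (Eq.symm ?_)
      simp only [id_eq]
      ring
  have HD3 : ∀ r : ℝ, HasDerivAt (fun x => (WithLp.equiv 2 (Fin 3 → ℝ)).symm ![s*n*Real.cos (n*x)*(Real.sin x*Real.cos (n*x) - n*(Real.cos x*Real.sin (n*x))) + s^3*(Real.sin (n*x)*(Real.cos x*Real.cos (n*x))), -(s*n*Real.cos (n*x)*(n*(Real.sin x*Real.sin (n*x)) + Real.cos x*Real.cos (n*x))) + s^3*(Real.sin (n*x)*(Real.sin x*Real.cos (n*x))), 2*s^2*n*(Real.sin (n*x)*Real.cos (n*x))])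
      ((WithLp.equiv 2 (Fin 3 → ℝ)).symm ![-(s*n^2*Real.sin (n*r)*(Real.sin r*Real.cos (n*r) - n*(Real.cos r*Real.sin (n*r)))) + 2*s^3*n*(Real.cos (n*r)*(Real.cos r*Real.cos (n*r))) + s^3*(Real.sin (n*r)*(-(Real.sin r*Real.cos (n*r)) - n*(Real.cos r*Real.sin (n*r)))), s*n^2*Real.sin (n*r)*(n*(Real.sin r*Real.sin (n*r)) + Real.cos r*Real.cos (n*r)) + 2*s^3*n*(Real.cos (n*r)*(Real.sin r*Real.cos (n*r))) + s^3*(Real.sin (n*r)*(Real.cos r*Real.cos (n*r) - n*(Real.sin r*Real.sin (n*r)))), 2*s^2*n^2*(Real.cos (n*r)^2 - Real.sin (n*r)^2)]) r := by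
    intro r
    have hS := Real.hasDerivAt_sin r
    have hC := Real.hasDerivAt_cos r
    have hSn := ((hasDerivAt_id r).const_mul n).sin
    have hCn := ((hasDerivAt_id r).const_mul n).cos
    apply hasDerivAt_E3
    · have H := ((hCn.const_mul (s*n)).mul ((hS.mul hCn).sub ((hC.mul hSn).const_mul n))).add
        ((hSn.mul (hC.mul hCn)).const_mul (s^3))
      refine H.congr_deriv (Eq.symm ?_)
      simp only [id_eq, Pi.mul_apply, Pi.sub_apply, Pi.add_apply, Pi.neg_apply]
      linear_combination ((n)*(s)*(Real.cos r)*(Real.cos (n*r))^2) * h3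
    · have H := ((hCn.const_mul (s*n)).mul (((hS.mul hSn).const_mul n).add (hC.mul hCn))).neg.add
        ((hSn.mul (hS.mul hCn)).const_mul (s^3))
      refine H.congr_deriv (Eq.symm ?_)
      simp only [id_eq, Pi.mul_apply, Pi.sub_apply, Pi.add_apply, Pi.neg_apply]
      linear_combination ((n)*(s)*(Real.sin r)*(Real.cos (n*r))^2) * h3
    · have H := (hSn.mul hCn).const_mul (2*s^2*n)
      refine H.congr_deriv (Eq.symm ?_)
      simp only [id_eq]
      ring

  have Hd1 : deriv ψ = fun r : ℝ => (WithLp.equiv 2 (Fin 3 → ℝ)).symm ![s*Real.sin (n*r)*(Real.sin r*Real.cos (n*r) - n*(Real.cos r*Real.sin (n*r))), -(s*Real.sin (n*r)*(n*(Real.sin r*Real.sin (n*r)) + Real.cos r*Real.cos (n*r))), s^2*Real.sin (n*r)^2] :=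
    funext fun r => (HD1 r).deriv
  have Hd2 : deriv (deriv ψ) = fun r : ℝ => (WithLp.equiv 2 (Fin 3 → ℝ)).symm ![s*n*Real.cos (n*r)*(Real.sin r*Real.cos (n*r) - n*(Real.cos r*Real.sin (n*r))) + s^3*(Real.sin (n*r)*(Real.cos r*Real.cos (n*r))), -(s*n*Real.cos (n*r)*(n*(Real.sin r*Real.sin (n*r)) + Real.cos r*Real.cos (n*r))) + s^3*(Real.sin (n*r)*(Real.sin r*Real.cos (n*r))), 2*s^2*n*(Real.sin (n*r)*Real.cos (n*r))] := by
    rw [Hd1]; exact funext fun r => (HD2 r).deriv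
  intro t hsn hcn
  have Hd3 : deriv (deriv (deriv ψ)) t = (WithLp.equiv 2 (Fin 3 → ℝ)).symm ![-(s*n^2*Real.sin (n*t)*(Real.sin t*Real.cos (n*t) - n*(Real.cos t*Real.sin (n*t)))) + 2*s^3*n*(Real.cos (n*t)*(Real.cos t*Real.cos (n*t))) + s^3*(Real.sin (n*t)*(-(Real.sin t*Real.cos (n*t)) - n*(Real.cos t*Real.sin (n*t)))), s*n^2*Real.sin (n*t)*(n*(Real.sin t*Real.sin (n*t)) + Real.cos t*Real.cos (n*t)) + 2*s^3*n*(Real.cos (n*t)*(Real.sin t*Real.cos (n*t))) + s^3*(Real.sin (n*t)*(Real.cos t*Real.cos (n*t) - n*(Real.sin t*Real.sin (n*t)))), 2*s^2*n^2*(Real.cos (n*t)^2 - Real.sin (n*t)^2)] := by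
    rw [Hd2]; exact (HD3 t).deriv
  have h1 : Real.sin t^2 + Real.cos t^2 = 1 := Real.sin_sq_add_cos_sq t
  have h2 : Real.sin (n*t)^2 + Real.cos (n*t)^2 = 1 := Real.sin_sq_add_cos_sq (n*t)
  rw [Hd3]
  simp only [Hd2]
  simp only [Hd1]
  rw [cross3_mk, norm_mk, norm_mk, inner_mk]
  have hK : (0:ℝ) < s^3*Real.sin (n*t)^2*Real.cos (n*t) := by positivity
  have hI1 : ((-(s*Real.sin (n*t)*(n*(Real.sin t*Real.sin (n*t)) + Real.cos t*Real.cos (n*t))))*(2*s^2*n*(Real.sin (n*t)*Real.cos (n*t)))-(s^2*Real.sin (n*t)^2)*(-(s*n*Real.cos (n*t)*(n*(Real.sin t*Real.sin (n*t)) + Real.cos t*Real.cos (n*t))) + s^3*(Real.sin (n*t)*(Real.sin t*Real.cos (n*t)))))^2 + ((s^2*Real.sin (n*t)^2)*(s*n*Real.cos (n*t)*(Real.sin t*Real.cos (n*t) - n*(Real.cos t*Real.sin (n*t))) + s^3*(Real.sin (n*t)*(Real.cos t*Real.cos (n*t))))-(s*Real.sin (n*t)*(Real.sin t*Real.cos (n*t)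 - n*(Real.cos t*Real.sin (n*t))))*(2*s^2*n*(Real.sin (n*t)*Real.cos (n*t))))^2 + ((s*Real.sin (n*t)*(Real.sin t*Real.cos (n*t) - n*(Real.cos t*Real.sin (n*t))))*(-(s*n*Real.cos (n*t)*(n*(Real.sin t*Real.sin (n*t)) + Real.cos t*Real.cos (n*t))) + s^3*(Real.sin (n*t)*(Real.sin t*Real.cos (n*t))))-(-(s*Real.sin (n*t)*(n*(Real.sin t*Real.sin (n*t)) + Real.cos t*Real.cos (n*t))))*(s*n*Real.cos (n*t)*(Real.sin t*Real.cos (n*t) - n*(Real.cos t*Real.sin (n*t))) + s^3*(Real.sin (n*t)*(Real.cos t*Real.cos (n*t)))))^2 = (s^3*Real.sin (n*t)^2*Real.cos (n*t))^2 := by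
    linear_combination ((s)^8*(Real.sin (n*t))^4*(Real.cos (n*t))^4 + (s)^8*(Real.cos t)^2*(Real.sin (n*t))^4*(Real.cos (n*t))^4 + (s)^8*(Real.sin t)^2*(Real.sin (n*t))^4*(Real.cos (n*t))^4 + (s)^10*(Real.sin (n*t))^6*(Real.cos (n*t))^2 + (n)^2*(s)^6*(Real.sin (n*t))^4*(Real.cos (n*t))^4 + 2*(n)^2*(s)^8*(Real.sin (n*t))^6*(Real.cos (n*t))^2 + (n)^4*(s)^6*(Real.sin (n*t))^6*(Real.cos (n*t))^2) * h1 + ((-1)*(s)^6*(Real.cos (n*t))^2 + (s)^6*(Real.cos (n*t))^4 + (-1)*(s)^6*(Real.sin (n*t))^2*(Real.cos (n*t))^2 + (s)^8*(Real.cos (n*t))^4 + (-1)*(s)^8*(Real.cos (n*t))^6 + (s)^8*(Real.sin (n*t))^2*(Real.cos (n*t))^4 + (s)^10*(Real.cos (n*t))^2 + -2*(s)^10*(Real.cos (n*t))^4 + (s)^10*(Real.cos (n*t))^6 + (s)^10*(Real.sin (n*t))^2*(Real.cos (n*t))^2 + (-1)*(s)^10*(Real.sin (n*t))^2*(Real.cos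 (n*t))^4 + (s)^10*(Real.sin (n*t))^4*(Real.cos (n*t))^2 + (n)^2*(s)^6*(Real.cos (n*t))^4 + (-1)*(n)^2*(s)^6*(Real.cos (n*t))^6 + (n)^2*(s)^6*(Real.sin (n*t))^2*(Real.cos (n*t))^4 + 2*(n)^2*(s)^8*(Real.cos (n*t))^2 + -4*(n)^2*(s)^8*(Real.cos (n*t))^4 + 2*(n)^2*(s)^8*(Real.cos (n*t))^6 + 2*(n)^2*(s)^8*(Real.sin (n*t))^2*(Real.cos (n*t))^2 + -2*(n)^2*(s)^8*(Real.sin (n*t))^2*(Real.cos (n*t))^4 + 2*(n)^2*(s)^8*(Real.sin (n*t))^4*(Real.cos (n*t))^2 + (n)^4*(s)^6*(Real.cos (n*t))^2 + -2*(n)^4*(s)^6*(Real.cos (n*t))^4 + (n)^4*(s)^6*(Real.cos (n*t))^6 + (n)^4*(s)^6*(Real.sin (n*t))^2*(Real.cos (n*t))^2 + (-1)*(n)^4*(s)^6*(Real.sin (n*t))^2*(Real.cos (n*t))^4 + (n)^4*(s)^6*(Real.sin (n*t))^4*(Real.cos (n*t))^2) * h2 + ((s)^6*(Real.cos (n*t))^2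 + -2*(s)^6*(Real.cos (n*t))^4 + (s)^6*(Real.cos (n*t))^6 + (s)^8*(Real.cos (n*t))^2 + -3*(s)^8*(Real.cos (n*t))^4 + 3*(s)^8*(Real.cos (n*t))^6 + (-1)*(s)^8*(Real.cos (n*t))^8 + (n)^2*(s)^6*(Real.cos (n*t))^2 + -3*(n)^2*(s)^6*(Real.cos (n*t))^4 + 3*(n)^2*(s)^6*(Real.cos (n*t))^6 + (-1)*(n)^2*(s)^6*(Real.cos (n*t))^8) * h3
  have hI2 : ((-(s*Real.sin (n*t)*(n*(Real.sin t*Real.sin (n*t)) + Real.cos t*Real.cos (n*t))))*(2*s^2*n*(Real.sin (n*t)*Real.cos (n*t)))-(s^2*Real.sin (n*t)^2)*(-(s*n*Real.cos (n*t)*(n*(Real.sin t*Real.sin (n*t)) + Real.cos t*Real.cos (n*t))) + s^3*(Real.sin (n*t)*(Real.sin t*Real.cos (n*t)))))*(-(s*n^2*Real.sin (n*t)*(Real.sin t*Real.cos (n*t) - n*(Real.cos t*Real.sin (n*t)))) + 2*s^3*n*(Real.cos (n*t)*(Real.cos t*Real.cos (n*t))) + s^3*(Real.sin (n*t)*(-(Real.sin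 t*Real.cos (n*t)) - n*(Real.cos t*Real.sin (n*t))))) + ((s^2*Real.sin (n*t)^2)*(s*n*Real.cos (n*t)*(Real.sin t*Real.cos (n*t) - n*(Real.cos t*Real.sin (n*t))) + s^3*(Real.sin (n*t)*(Real.cos t*Real.cos (n*t))))-(s*Real.sin (n*t)*(Real.sin t*Real.cos (n*t) - n*(Real.cos t*Real.sin (n*t))))*(2*s^2*n*(Real.sin (n*t)*Real.cos (n*t))))*(s*n^2*Real.sin (n*t)*(n*(Real.sin t*Real.sin (n*t)) + Real.cos t*Real.cos (n*t)) + 2*s^3*n*(Real.cos (n*t)*(Real.sin t*Real.cos (n*t))) + s^3*(Real.sin (n*t)*(Real.cos t*Real.cos (n*t) - n*(Real.sin t*Real.sin (n*t))))) + ((s*Real.sin (n*t)*(Real.sin t*Real.cos (n*t) - n*(Real.cos t*Real.sin (n*t))))*(-(s*n*Real.cos (n*t)*(n*(Real.sin t*Real.sin (n*t)) + Real.cos t*Real.cos (n*t))) + s^3*(Real.sin (n*t)*(Real.sin t*Real.cos (n*t))))-(-(s*Real.sin (n*t)*(n*(Real.sin t*Real.sin (n*t)) + Real.cos t*Real.cos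 (n*t))))*(s*n*Real.cos (n*t)*(Real.sin t*Real.cos (n*t) - n*(Real.cos t*Real.sin (n*t))) + s^3*(Real.sin (n*t)*(Real.cos t*Real.cos (n*t)))))*(2*s^2*n^2*(Real.cos (n*t)^2 - Real.sin (n*t)^2))
      = (s^3*Real.sin (n*t)^2*Real.cos (n*t))^2 := by
    linear_combination ((s)^8*(Real.sin (n*t))^4*(Real.cos (n*t))^2 + (n)^2*(s)^6*(Real.sin (n*t))^4*(Real.cos (n*t))^2) * h1 + ((-1)*(s)^6*(Real.cos (n*t))^2 + (s)^6*(Real.cos (n*t))^4 + (-1)*(s)^6*(Real.sin (n*t))^2*(Real.cos (n*t))^2 + (s)^8*(Real.cos (n*t))^2 + (-1)*(s)^8*(Real.cos (n*t))^4 + (s)^8*(Real.sin (n*t))^2*(Real.cos (n*t))^2 + (n)^2*(s)^6*(Real.cos (n*t))^2 + (-1)*(n)^2*(s)^6*(Real.cos (n*t))^4 + (n)^2*(s)^6*(Real.sin (n*t))^2*(Real.cos (n*t))^2) * h2 + ((s)^6*(Real.cos (n*t))^2 + -2*(s)^6*(Real.cos (n*t))^4 + (s)^6*(Real.cos (n*t))^6)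 * h3
  have hI3 : (s*Real.sin (n*t)*(Real.sin t*Real.cos (n*t) - n*(Real.cos t*Real.sin (n*t))))^2 + (-(s*Real.sin (n*t)*(n*(Real.sin t*Real.sin (n*t)) + Real.cos t*Real.cos (n*t))))^2 + (s^2*Real.sin (n*t)^2)^2 = (s*Real.sin (n*t))^2 := by
    linear_combination ((s)^2*(Real.sin (n*t))^2*(Real.cos (n*t))^2 + (n)^2*(s)^2*(Real.sin (n*t))^4) * h1 + ((-1)*(s)^2 + (s)^2*(Real.cos (n*t))^2 + (s)^4 + (-1)*(s)^4*(Real.cos (n*t))^2 + (s)^4*(Real.sin (n*t))^2 + (n)^2*(s)^2 + (-1)*(n)^2*(s)^2*(Real.cos (n*t))^2 + (n)^2*(s)^2*(Real.sin (n*t))^2) * h2 + ((s)^2 + -2*(s)^2*(Real.cos (n*t))^2 + (s)^2*(Real.cos (n*t))^4) * h3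
  rw [hI1, hI2, hI3, Real.sqrt_sq hK.le, Real.sqrt_sq (by positivity : (0:ℝ) ≤ s*Real.sin (n*t))]
  constructor
  · exact div_self (by positivity)
  · rw [div_eq_div_iff (by positivity) (ne_of_gt hsn)]
    ring
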